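/- There exist a positive integer Z, a length T, a request sequence σ ∈ ℕ^T, and vectors b, b' ∈ {0,1}^T with b ≤ b' (differing in exactly one coordinate) such that the delayed hits latency satisfies ℓ_σ(b) < ℓ_σ(b'). Hence the delayed hits latency function is not antimonotone. -/

import Mathlib

/-- Earliest in-flight miss for request `t` in the delayed hits model. -/
noncomputable def pD (Z : ℕ) (σ : ℕ → ℕ) (b : ℕ → Bool) (t : ℕ) : ℕ :=
  sInf {s | max 1 (t + 1 - Z) ≤ s ∧ s ≤ t ∧ b s = false ∧ σ s = σ t}

/-- Delayed hits latency `ℓ_σ(b) = Σ_t (1 - b_t)(Z - (t - p_t(b)))`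
(item `0` means no request). -/
noncomputable def ellD (Z T : ℕ) (σ : ℕ → ℕ) (b : ℕ → Bool) : ℤ :=
  ∑ t ∈ Finset.Icc 1 T, if σ t = 0 ∨ b t then 0 else (Z : ℤ) - t + pD Z σ b t

lemma sInf_eq_of {S : Set ℕ} {k : ℕ} (hk : k ∈ S) (hl : ∀ s ∈ S, k ≤ s) : sInf S = k :=
  le_antisymm (Nat.sInf_le hk) (le_csInf ⟨k, hk⟩ hl)

/-- The delayed hits latency function is not antimonotone: there exist a delay
`Z`, a request sequence `σ` of length `T`, and hit vectors `b ≤ b'` differing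
in exactly one coordinate with `ℓ_σ(b) < ℓ_σ(b')`. -/
theorem delayed_hits_not_antimonotone :
    ∃ (Z T : ℕ) (σ : ℕ → ℕ) (b b' : ℕ → Bool),
      0 < Z ∧
      (∀ t, b t = true → b' t = true) ∧
      (∃ t0 ∈ Finset.Icc 1 T, b t0 = false ∧ b' t0 = true ∧
        ∀ t, t ≠ t0 → b t = b' t) ∧
      ellD Z T σ b < ellD Z T σ b' := by
  refine ⟨6, 6, fun t => if t = 1 ∨ t = 4 ∨ t = 5 ∨ t = 6 then 1 else 0,
    fun _ => false, fun t => decide (t = 1), by norm_num,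
    fun t h => by simp at h, ⟨1, by decide, rfl, by decide, fun t ht => by simp [ht]⟩, ?_⟩
  set σ : ℕ → ℕ := fun t => if t = 1 ∨ t = 4 ∨ t = 5 ∨ t = 6 then 1 else 0 with hσ
  have hpb : ∀ t, t = 1 ∨ t = 4 ∨ t = 5 ∨ t = 6 → pD 6 σ (fun _ => false) t = 1 := by
    intro t ht
    apply sInf_eq_of
    · refine ⟨by omega, by omega, rfl, ?_⟩
      simp only [hσ]
      rw [if_pos (by norm_num), if_pos ht]
    · rintro s ⟨h1, -, -, -⟩
      omega
  have hpb' : ∀ t, t = 4 ∨ t = 5 ∨ t = 6 →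
      pD 6 σ (fun t => decide (t = 1)) t = 4 := by
    intro t ht
    apply sInf_eq_of
    · refine ⟨by omega, by omega, by decide, ?_⟩
      simp only [hσ]
      rw [if_pos (by norm_num), if_pos (by tauto)]
    · rintro s ⟨h1, h2, h3, h4⟩
      simp only [decide_eq_false_iff_not] at h3
      have ht' : t = 1 ∨ t = 4 ∨ t = 5 ∨ t = 6 := Or.inr ht
      simp only [hσ] at h4
      rw [if_pos ht'] at h4
      by_cases hs : s = 1 ∨ s = 4 ∨ s = 5 ∨ s = 6
      · omega
      · rw [if_neg hs] at h4; omega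
  have hI : (Finset.Icc 1 6 : Finset ℕ) = {1, 2, 3, 4, 5, 6} := by decide
  simp only [ellD, hI, Finset.sum_insert, Finset.mem_insert, Finset.sum_singleton]
  simp +decide only [Finset.sum_insert, Finset.mem_insert, Finset.mem_singleton, Finset.sum_singleton]
  simp only [hpb 1 (by norm_num), hpb 4 (by norm_num), hpb 5 (by norm_num),
    hpb 6 (by norm_num), hpb' 4 (by norm_num), hpb' 5 (by norm_num), hpb' 6 (by norm_num)]
  norm_num [hσ, hpb 1 (by norm_num), hpb 4 (by norm_num), hpb 5 (by norm_num),
    hpb 6 (by norm_num), hpb' 4 (by norm_num), hpb' 5 (by norm_num), hpb' 6 (by norm_num)]
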